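/- Let D be a design of strength R−1 (R ≥ 2) with n ≥ R factors, each factor given a normalized orthogonal coding. Let U be an R-element set of factors and s_min = min_{i∈U} s i. Then a_R(U) ≤ s_min − 1. -/

import Mathlib

open Finset Matrix

/-- A design `D` (rows = runs, coordinates = factors) has strength `t` if in every
projection onto `t` factors every level combination occurs equally often. -/
def hasStrength {N n : ℕ} (s : Fin n → ℕ) (D : Fin N → ∀ i, Fin (s i)) (t : ℕ) : Prop :=
  ∀ T : Finset (Fin n), T.card = t → ∀ x : ∀ i, Fin (s i),
    (Finset.univ.filter fun r => ∀ i ∈ T, D r i = x i).card = N / ∏ i ∈ T, s i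

/-- Normalized orthogonal coding: contrast columns have zero sum and
`Cᵀ C = m • 1` (squared length `m`, pairwise orthogonal). -/
def isNOC {m : ℕ} (C : Fin m → Fin (m - 1) → ℝ) : Prop :=
  (∀ j, ∑ l, C l j = 0) ∧
    ∀ j j', ∑ l, C l j * C l j' = if j = j' then (m : ℝ) else 0

/-- Column (indexed by the tuple `j`) of the interaction model matrix of the set `U`
of factors, evaluated at run `r`. -/
def intCol {N n : ℕ} {s : Fin n → ℕ} (C : ∀ i, Fin (s i) → Fin (s i - 1) → ℝ)
    (D : Fin N → ∀ i, Fin (s i)) (U : Finset (Fin n))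
    (j : ∀ i : U, Fin (s i.1 - 1)) (r : Fin N) : ℝ :=
  ∏ i : U, C i.1 (D r i.1) (j i)

/-- Projection frequency `a_k(U)`: sum of squared column sums of the interaction
model matrix of `U`, divided by `N²`. -/
noncomputable def projFreq {N n : ℕ} {s : Fin n → ℕ}
    (C : ∀ i, Fin (s i) → Fin (s i - 1) → ℝ)
    (D : Fin N → ∀ i, Fin (s i)) (U : Finset (Fin n)) : ℝ :=
  (∑ j : ∀ i : U, Fin (s i.1 - 1), (∑ r, intCol C D U j r) ^ 2) / (N : ℝ) ^ 2

/-- Rows of a normalized orthogonal coding extended by the all-ones column form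
an orthogonal matrix, so `C Cᵀ = m • 1 - J`. -/
lemma noc_row {m : ℕ} (hm : 1 ≤ m) {C : Fin m → Fin (m - 1) → ℝ} (hC : isNOC C)
    (a b : Fin m) : ∑ j, C a j * C b j = (if a = b then (m : ℝ) else 0) - 1 := by
  have hcard : Fintype.card (Fin (m - 1) ⊕ Unit) = Fintype.card (Fin m) := by
    simp [Nat.sub_add_cancel hm]
  let e : (Fin (m - 1) ⊕ Unit) ≃ Fin m := Fintype.equivOfCardEq hcard
  set M' : Matrix (Fin m) (Fin (m - 1) ⊕ Unit) ℝ :=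
    fun l z => Sum.elim (C l) (fun _ => 1) z with hM'
  have h0 : ∀ z z', ∑ l, M' l z * M' l z' = if z = z' then (m : ℝ) else 0 := by
    rintro (j | u) (j' | u')
    · simpa [hM', Sum.inl.injEq] using hC.2 j j'
    · simpa [hM'] using hC.1 j
    · simpa [hM', mul_comm] using hC.1 j'
    · simp [hM', Finset.card_univ]
  let M : Matrix (Fin m) (Fin m) ℝ := M'.submatrix id e.symm
  have hmne : (m : ℝ) ≠ 0 := by positivity
  have h1 : Mᵀ * M = (m : ℝ) • 1 := by
    ext k k'
    simp only [Matrix.mul_apply, Matrix.transpose_apply, Matrix.smul_apply,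
      Matrix.one_apply, smul_eq_mul, M, Matrix.submatrix_apply, id]
    rw [h0]
    simp [EmbeddingLike.apply_eq_iff_eq, mul_ite]
  have h2 : ((m : ℝ)⁻¹ • Mᵀ) * M = 1 := by
    rw [Matrix.smul_mul, h1, smul_smul, inv_mul_cancel₀ hmne, one_smul]
  have h3 : M * ((m : ℝ)⁻¹ • Mᵀ) = 1 := mul_eq_one_comm.mp h2
  have h4 : M * Mᵀ = (m : ℝ) • 1 := by
    have := congrArg (fun A => (m : ℝ) • A) h3
    simpa [Matrix.mul_smul, smul_smul, mul_inv_cancel₀ hmne] using this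
  have h5 : ∑ k, M a k * M b k = if a = b then (m : ℝ) else 0 := by
    have := congrFun (congrFun h4 a) b
    simpa [Matrix.mul_apply, Matrix.one_apply, Matrix.transpose_apply] using this
  have h6 : ∑ z : Fin (m - 1) ⊕ Unit, M' a z * M' b z = if a = b then (m : ℝ) else 0 := by
    rw [← h5]
    exact Fintype.sum_equiv e _ _ (fun z => by simp [M])
  rw [Fintype.sum_sum_type] at h6
  simp only [hM', Sum.elim_inl, Sum.elim_inr, mul_one] at h6
  simp only [Finset.sum_const, Finset.card_univ, Fintype.card_unit, one_smul] at h6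
  linarith [h6]

lemma partition_eq {N n : ℕ} {s : Fin n → ℕ} (D : Fin N → ∀ i, Fin (s i)) {t : ℕ}
    (hs : ∀ i, 2 ≤ s i)
    (hD : hasStrength s D t) {T' : Finset (Fin n)} (hT' : T'.card = t) :
    N = (∏ i ∈ T', s i) * (N / ∏ i ∈ T', s i) := by
  classical
  have key : ∀ p : (∀ i : T', Fin (s i.1)),
      (univ.filter fun r : Fin N => (fun i : T' => D r i.1) = p).card
        = N / ∏ i ∈ T', s i := by
    intro p
    have hx := hD T' hT' (fun i => if h : i ∈ T' then p ⟨i, h⟩ else ⟨0, by have := hs i; omega⟩)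
    rw [← hx]
    congr 1
    ext r
    simp only [mem_filter, mem_univ, true_and, funext_iff]
    constructor
    · intro h i hi; rw [dif_pos hi]; exact h ⟨i, hi⟩
    · intro h i; have := h i.1 i.2; rwa [dif_pos i.2] at this
  have total := Finset.card_eq_sum_card_fiberwise
    (M := ∀ i : T', Fin (s i.1))
    (s := (univ : Finset (Fin N))) (t := univ)
    (f := fun r => fun i : T' => D r i.1) (fun x _ => mem_univ _)
  simp only [key, Finset.sum_const, Finset.card_univ, Fintype.card_pi,
    Fintype.card_fin, smul_eq_mul] at total
  rwa [Finset.prod_coe_sort] at total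

lemma count_refine {N n : ℕ} {s : Fin n → ℕ} (D : Fin N → ∀ i, Fin (s i)) {t : ℕ}
    (hD : hasStrength s D t) {T T' : Finset (Fin n)} (hsub : T ⊆ T')
    (hT' : T'.card = t) (x : ∀ i, Fin (s i)) :
    (univ.filter fun r : Fin N => ∀ i ∈ T, D r i = x i).card
      = (∏ i ∈ T' \ T, s i) * (N / ∏ i ∈ T', s i) := by
  classical
  have key : ∀ q : (∀ i : (T' \ T : Finset (Fin n)), Fin (s i.1)),
      ((univ.filter fun r : Fin N => ∀ i ∈ T, D r i = x i).filter
        (fun r => (fun i : (T' \ T : Finset (Fin n)) => D r i.1) = q)).card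
      = N / ∏ i ∈ T', s i := by
    intro q
    rw [← hD T' hT' (fun i => if h : i ∈ T' \ T then q ⟨i, h⟩ else x i)]
    congr 1
    ext r
    simp only [mem_filter, mem_univ, true_and, funext_iff]
    constructor
    · rintro ⟨h1, h2⟩ i hi
      by_cases h : i ∈ T' \ T
      · rw [dif_pos h]; exact h2 ⟨i, h⟩
      · have hiT : i ∈ T := by
          by_contra hT0
          exact h (Finset.mem_sdiff.mpr ⟨hi, hT0⟩)
        rw [dif_neg h]; exact h1 i hiT
    · intro h
      constructor
      · intro i hi
        have := h i (hsub hi)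
        rwa [dif_neg (by simp [Finset.mem_sdiff, hi])] at this
      · intro i
        have h2 := h i.1 (Finset.mem_sdiff.mp i.2).1
        simp only [dif_pos i.2] at h2
        exact h2
  have total := Finset.card_eq_sum_card_fiberwise
    (M := ∀ i : (T' \ T : Finset (Fin n)), Fin (s i.1))
    (s := univ.filter fun r : Fin N => ∀ i ∈ T, D r i = x i)
    (t := univ)
    (f := fun r => fun i => D r i.1) (fun r _ => mem_univ _)
  simp only [key, Finset.sum_const, smul_eq_mul, Finset.card_univ, Fintype.card_pi,
    Fintype.card_fin] at total
  rwa [Finset.prod_coe_sort] at total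

lemma count_mul_eq {N n : ℕ} {s : Fin n → ℕ} (hs : ∀ i, 2 ≤ s i)
    (D : Fin N → ∀ i, Fin (s i)) {t : ℕ}
    (hD : hasStrength s D t) (ht : t ≤ n) {T : Finset (Fin n)} (hT : T.card ≤ t)
    (x : ∀ i, Fin (s i)) :
    (∏ i ∈ T, s i) * (univ.filter fun r : Fin N => ∀ i ∈ T, D r i = x i).card = N := by
  obtain ⟨T', hsub, -, hT'⟩ := Finset.exists_subsuperset_card_eq (Finset.subset_univ T)
    hT (by simpa using ht)
  rw [count_refine D hD hsub hT' x, ← mul_assoc, mul_comm (∏ i ∈ T, s i),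
    Finset.prod_sdiff hsub]
  exact (partition_eq D hs hD hT').symm

lemma mySignSum {α : Type*} [DecidableEq α] {U : Finset α} (hU : U.Nonempty) :
    ∑ T ∈ U.powerset.erase U, (-1 : ℝ) ^ ((U \ T).card) = -1 := by
  have h1 : ∑ T ∈ U.powerset, (-1 : ℝ) ^ ((U \ T).card)
      = ∑ T ∈ U.powerset, (-1 : ℝ) ^ T.card := by
    refine Finset.sum_nbij' (i := fun T => U \ T) (j := fun T => U \ T) ?_ ?_ ?_ ?_ ?_
    · intro T hT; exact Finset.mem_powerset.mpr sdiff_subset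
    · intro T hT; exact Finset.mem_powerset.mpr sdiff_subset
    · intro T hT; exact Finset.sdiff_sdiff_eq_self (Finset.mem_powerset.mp hT)
    · intro T hT; exact Finset.sdiff_sdiff_eq_self (Finset.mem_powerset.mp hT)
    · intro T hT; rfl
  have h2 : ∑ T ∈ U.powerset, (-1 : ℝ) ^ T.card = 0 := by
    have := Finset.sum_powerset_neg_one_pow_card_of_nonempty (x := U) hU
    have h3 : ((∑ m ∈ U.powerset, (-1 : ℤ) ^ m.card : ℤ) : ℝ) = 0 := by rw [this]; simp
    push_cast at h3
    exact h3
  have h4 := Finset.add_sum_erase U.powerset (fun T => (-1 : ℝ) ^ ((U \ T).card))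
    (Finset.mem_powerset_self U)
  rw [h1, h2] at h4
  simp only [Finset.sdiff_self, Finset.bot_eq_empty, Finset.card_empty, pow_zero] at h4
  linarith

/-- `a_R(U) ≤ s_min - 1`, where `s_min = min_{i ∈ U} s i`. -/
theorem statement2 {N n R : ℕ} (hN : 1 ≤ N) (hR : 2 ≤ R) (hn : R ≤ n)
    {s : Fin n → ℕ} (hs : ∀ i, 2 ≤ s i)
    (D : Fin N → ∀ i, Fin (s i)) (hD : hasStrength s D (R - 1))
    (C : ∀ i, Fin (s i) → Fin (s i - 1) → ℝ) (hC : ∀ i, isNOC (C i))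
    (U : Finset (Fin n)) (hU : U.card = R) :
    projFreq C D U ≤ ((sInf (s '' (U : Set (Fin n))) : ℕ) : ℝ) - 1 := by
  classical
  have hUne : U.Nonempty := Finset.card_pos.mp (by omega)
  obtain ⟨i0, hi0U, hi0⟩ := Nat.sInf_mem ((Finset.coe_nonempty.mpr hUne).image s)
  have hi0U' : i0 ∈ U := Finset.mem_coe.mp hi0U
  set W := U.erase i0 with hWdef
  have hWcard : W.card = R - 1 := by rw [hWdef, Finset.card_erase_of_mem hi0U', hU]
  have ht : R - 1 ≤ n := by omega
  -- Step 1: expand the numerator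
  have hnum : (∑ j : ∀ i : U, Fin (s i.1 - 1), (∑ r, intCol C D U j r) ^ 2)
      = ∑ r : Fin N, ∑ r' : Fin N,
          ∏ i ∈ U, ((if D r' i = D r i then (s i : ℝ) else 0) - 1) := by
    have e1 : ∀ j : ∀ i : U, Fin (s i.1 - 1),
        (∑ r, intCol C D U j r) ^ 2 = ∑ r, ∑ r', intCol C D U j r * intCol C D U j r' := by
      intro j; rw [sq, Finset.sum_mul_sum]
    rw [Finset.sum_congr rfl fun j _ => e1 j, Finset.sum_comm]
    refine Finset.sum_congr rfl fun r _ => ?_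
    rw [Finset.sum_comm]
    refine Finset.sum_congr rfl fun r' _ => ?_
    have h1 : ∀ j : ∀ i : U, Fin (s i.1 - 1), intCol C D U j r * intCol C D U j r'
        = ∏ i : U, (C i.1 (D r' i.1) (j i) * C i.1 (D r i.1) (j i)) := by
      intro j
      rw [intCol, intCol, ← Finset.prod_mul_distrib]
      exact Finset.prod_congr rfl fun i _ => mul_comm _ _
    rw [Finset.sum_congr rfl fun j _ => h1 j]
    have h2 := Finset.prod_univ_sum (ι := U) (κ := fun i => Fin (s i.1 - 1))
      (fun _ => univ) (fun i jj => C i.1 (D r' i.1) jj * C i.1 (D r i.1) jj)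
    rw [Fintype.piFinset_univ] at h2
    rw [← h2]
    rw [← Finset.prod_coe_sort U fun i => (if D r' i = D r i then (s i : ℝ) else 0) - 1]
    exact Finset.prod_congr rfl fun i _ =>
      noc_row (le_trans one_le_two (hs i.1)) (hC i.1) (D r' i.1) (D r i.1)
  -- Step 2: binomial-type expansion over subsets
  have hsplit : ∀ r r' : Fin N,
      ∏ i ∈ U, ((if D r' i = D r i then (s i : ℝ) else 0) - 1)
        = ∑ T ∈ U.powerset, ((∏ i ∈ T, (s i : ℝ)) *
            (if ∀ i ∈ T, D r' i = D r i then (1 : ℝ) else 0)) * (-1 : ℝ) ^ ((U \ T).card) := by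
    intro r r'
    have hpa := Finset.prod_add (fun i => if D r' i = D r i then (s i : ℝ) else 0)
      (fun _ => (-1 : ℝ)) U
    simp only [sub_eq_add_neg]
    rw [hpa]
    refine Finset.sum_congr rfl fun T _ => ?_
    rw [Finset.prod_const]
    have key : ∏ i ∈ T, (if D r' i = D r i then (s i : ℝ) else 0)
        = (∏ i ∈ T, (s i : ℝ)) * (if ∀ i ∈ T, D r' i = D r i then (1 : ℝ) else 0) := by
      calc ∏ i ∈ T, (if D r' i = D r i then (s i : ℝ) else 0)
          = ∏ i ∈ T, ((s i : ℝ) * (if D r' i = D r i then (1 : ℝ) else 0)) := by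
            refine Finset.prod_congr rfl fun i _ => ?_
            by_cases h : D r' i = D r i <;> simp [h]
        _ = (∏ i ∈ T, (s i : ℝ)) * ∏ i ∈ T, (if D r' i = D r i then (1 : ℝ) else 0) :=
            Finset.prod_mul_distrib
        _ = (∏ i ∈ T, (s i : ℝ)) * (if ∀ i ∈ T, D r' i = D r i then (1 : ℝ) else 0) := by
            rw [Finset.prod_boole]
            congr!
    rw [key]
  -- Step 3: reorganize into a sum over subsets
  have hnum2 : (∑ j : ∀ i : U, Fin (s i.1 - 1), (∑ r, intCol C D U j r) ^ 2)
      = ∑ T ∈ U.powerset, ((∏ i ∈ T, (s i : ℝ)) *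
          ∑ r : Fin N, (((univ.filter fun r' : Fin N => ∀ i ∈ T, D r' i = D r i).card : ℕ) : ℝ))
            * (-1 : ℝ) ^ ((U \ T).card) := by
    rw [hnum]
    calc ∑ r : Fin N, ∑ r' : Fin N, ∏ i ∈ U, ((if D r' i = D r i then (s i : ℝ) else 0) - 1)
        = ∑ r : Fin N, ∑ r' : Fin N, ∑ T ∈ U.powerset, ((∏ i ∈ T, (s i : ℝ)) *
            (if ∀ i ∈ T, D r' i = D r i then (1 : ℝ) else 0)) * (-1 : ℝ) ^ ((U \ T).card) :=
          Finset.sum_congr rfl fun r _ => Finset.sum_congr rfl fun r' _ => hsplit r r'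
      _ = ∑ r : Fin N, ∑ T ∈ U.powerset, ∑ r' : Fin N, ((∏ i ∈ T, (s i : ℝ)) *
            (if ∀ i ∈ T, D r' i = D r i then (1 : ℝ) else 0)) * (-1 : ℝ) ^ ((U \ T).card) :=
          Finset.sum_congr rfl fun r _ => Finset.sum_comm
      _ = ∑ T ∈ U.powerset, ∑ r : Fin N, ∑ r' : Fin N, ((∏ i ∈ T, (s i : ℝ)) *
            (if ∀ i ∈ T, D r' i = D r i then (1 : ℝ) else 0)) * (-1 : ℝ) ^ ((U \ T).card) :=
          Finset.sum_comm
      _ = ∑ T ∈ U.powerset, ((∏ i ∈ T, (s i : ℝ)) *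
            ∑ r : Fin N, (((univ.filter fun r' : Fin N =>
              ∀ i ∈ T, D r' i = D r i).card : ℕ) : ℝ)) * (-1 : ℝ) ^ ((U \ T).card) := by
          refine Finset.sum_congr rfl fun T _ => ?_
          have step : ∀ r : Fin N, ∑ r' : Fin N, ((∏ i ∈ T, (s i : ℝ)) *
              (if ∀ i ∈ T, D r' i = D r i then (1 : ℝ) else 0)) * (-1 : ℝ) ^ ((U \ T).card)
              = ((∏ i ∈ T, (s i : ℝ)) * (((univ.filter fun r' : Fin N =>
                  ∀ i ∈ T, D r' i = D r i).card : ℕ) : ℝ)) * (-1 : ℝ) ^ ((U \ T).card) := by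
            intro r
            rw [← Finset.sum_mul, ← Finset.mul_sum, Finset.sum_boole]
          rw [Finset.sum_congr rfl fun r _ => step r, ← Finset.sum_mul, ← Finset.mul_sum]
  -- Step 4: evaluate the terms
  have hsmall : ∀ T ∈ U.powerset.erase U, ((∏ i ∈ T, (s i : ℝ)) *
      ∑ r : Fin N, (((univ.filter fun r' : Fin N => ∀ i ∈ T, D r' i = D r i).card : ℕ) : ℝ))
        * (-1 : ℝ) ^ ((U \ T).card) = (N : ℝ) ^ 2 * (-1 : ℝ) ^ ((U \ T).card) := by
    intro T hT
    obtain ⟨hne, hTU⟩ := Finset.mem_erase.mp hT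
    have hTsub := Finset.mem_powerset.mp hTU
    have hTcard : T.card ≤ R - 1 := by
      have := Finset.card_lt_card (Finset.ssubset_iff_subset_ne.mpr ⟨hTsub, hne⟩)
      omega
    congr 1
    have hinner : ∀ r : Fin N, (∏ i ∈ T, (s i : ℝ)) *
        (((univ.filter fun r' : Fin N => ∀ i ∈ T, D r' i = D r i).card : ℕ) : ℝ) = (N : ℝ) := by
      intro r
      have hc := count_mul_eq hs D hD ht hTcard (D r)
      calc (∏ i ∈ T, (s i : ℝ)) *
          (((univ.filter fun r' : Fin N => ∀ i ∈ T, D r' i = D r i).card : ℕ) : ℝ)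
          = (((∏ i ∈ T, s i) *
              (univ.filter fun r' : Fin N => ∀ i ∈ T, D r' i = D r i).card : ℕ) : ℝ) := by
            push_cast; ring
        _ = (N : ℝ) := by rw [hc]
    rw [Finset.mul_sum, Finset.sum_congr rfl fun r _ => hinner r]
    simp [Finset.sum_const, Finset.card_univ, sq]
  have hbig : ((∏ i ∈ U, (s i : ℝ)) *
      ∑ r : Fin N, (((univ.filter fun r' : Fin N => ∀ i ∈ U, D r' i = D r i).card : ℕ) : ℝ))
        * (-1 : ℝ) ^ ((U \ U).card) ≤ (N : ℝ) ^ 2 * (s i0 : ℝ) := by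
    rw [Finset.sdiff_self]
    simp only [Finset.bot_eq_empty, Finset.card_empty, pow_zero, mul_one]
    have hinner : ∀ r : Fin N, (∏ i ∈ U, (s i : ℝ)) *
        (((univ.filter fun r' : Fin N => ∀ i ∈ U, D r' i = D r i).card : ℕ) : ℝ)
          ≤ (N : ℝ) * (s i0 : ℝ) := by
      intro r
      have hmono : (univ.filter fun r' : Fin N => ∀ i ∈ U, D r' i = D r i).card
          ≤ (univ.filter fun r' : Fin N => ∀ i ∈ W, D r' i = D r i).card := by
        apply Finset.card_le_card
        apply Finset.monotone_filter_right
        intro r' _ h i hi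
        exact h i (Finset.mem_of_mem_erase hi)
      have hWc := count_mul_eq hs D hD ht (le_of_eq hWcard) (D r)
      have hprod : (∏ i ∈ U, s i) = s i0 * ∏ i ∈ W, s i :=
        (Finset.mul_prod_erase U s hi0U').symm
      have hmain : (∏ i ∈ U, s i) *
          (univ.filter fun r' : Fin N => ∀ i ∈ U, D r' i = D r i).card ≤ s i0 * N := by
        calc (∏ i ∈ U, s i) * (univ.filter fun r' : Fin N => ∀ i ∈ U, D r' i = D r i).card
            = s i0 * ((∏ i ∈ W, s i) *
                (univ.filter fun r' : Fin N => ∀ i ∈ U, D r' i = D r i).card) := by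
              rw [hprod]; ring
          _ ≤ s i0 * ((∏ i ∈ W, s i) *
                (univ.filter fun r' : Fin N => ∀ i ∈ W, D r' i = D r i).card) :=
              Nat.mul_le_mul_left _ (Nat.mul_le_mul_left _ hmono)
          _ = s i0 * N := by rw [hWc]
      calc (∏ i ∈ U, (s i : ℝ)) *
          (((univ.filter fun r' : Fin N => ∀ i ∈ U, D r' i = D r i).card : ℕ) : ℝ)
          = (((∏ i ∈ U, s i) *
              (univ.filter fun r' : Fin N => ∀ i ∈ U, D r' i = D r i).card : ℕ) : ℝ) := by
            push_cast; ring
        _ ≤ ((s i0 * N : ℕ) : ℝ) := by exact_mod_cast hmain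
        _ = (N : ℝ) * (s i0 : ℝ) := by push_cast; ring
    calc (∏ i ∈ U, (s i : ℝ)) *
        ∑ r : Fin N, (((univ.filter fun r' : Fin N => ∀ i ∈ U, D r' i = D r i).card : ℕ) : ℝ)
        = ∑ r : Fin N, (∏ i ∈ U, (s i : ℝ)) *
            (((univ.filter fun r' : Fin N => ∀ i ∈ U, D r' i = D r i).card : ℕ) : ℝ) :=
          Finset.mul_sum _ _ _
      _ ≤ ∑ _r : Fin N, (N : ℝ) * (s i0 : ℝ) := Finset.sum_le_sum fun r _ => hinner r
      _ = (N : ℝ) ^ 2 * (s i0 : ℝ) := by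
          simp [Finset.sum_const, Finset.card_univ, sq]; ring
  -- Step 5: combine
  have hfinal : (∑ j : ∀ i : U, Fin (s i.1 - 1), (∑ r, intCol C D U j r) ^ 2)
      ≤ (N : ℝ) ^ 2 * (s i0 : ℝ) - (N : ℝ) ^ 2 := by
    rw [hnum2]
    rw [← Finset.add_sum_erase _ _ (Finset.mem_powerset_self U)]
    have h1 : ∑ T ∈ U.powerset.erase U, ((∏ i ∈ T, (s i : ℝ)) *
        ∑ r : Fin N, (((univ.filter fun r' : Fin N => ∀ i ∈ T, D r' i = D r i).card : ℕ) : ℝ))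
          * (-1 : ℝ) ^ ((U \ T).card) = -(N : ℝ) ^ 2 := by
      rw [Finset.sum_congr rfl hsmall, ← Finset.mul_sum, mySignSum hUne]
      ring
    rw [h1]
    linarith [hbig]
  have hN2 : (0 : ℝ) < (N : ℝ) ^ 2 := by
    have : (0 : ℝ) < (N : ℝ) := by exact_mod_cast hN
    positivity
  rw [projFreq, div_le_iff₀ hN2]
  have hsmin : ((sInf (s '' (U : Set (Fin n))) : ℕ) : ℝ) = (s i0 : ℝ) := by rw [← hi0]
  rw [hsmin]
  nlinarith [hfinal]
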